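/- Let u₁, ..., u_d be independent real random variables with u_i having compatible density π_θ^{(i)} and CDF Π_θ^{(i)}, and let f: ℝ^d → ℝ be bounded measurable with f(u) = f(clip(u, α, β)) (clipping applied elementwise). Define ψ(u) = Σ_i ∇_θ log π_θ^{(i)}(u_i) and ψ̄(u) = Σ_i ψ̄^{(i)}(u_i), where ψ̄^{(i)} is the CAPG score of π_θ^{(i)}. Then E_u[f(u) ψ̄(u)] = E_u[f(u) ψ(u)]. -/

import Mathlib

open MeasureTheory Set

/-- 1-D key lemma: the "tail correction" integrates to zero against any function
constant on the tails. -/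
lemma capg_key1d (α β : ℝ) (hαβ : α < β) (q p' sψ δ : ℝ → ℝ) (cA cB : ℝ)
    (hq : Integrable q)
    (hδ : ∀ u, δ u = if u ≤ α then cA - sψ u else if u < β then 0 else cB - sψ u)
    (hqp : ∀ᵐ u, sψ u * q u = p' u)
    (hA : cA * ∫ u in Iic α, q u = ∫ u in Iic α, p' u)
    (hB : cB * ∫ u in Ici β, q u = ∫ u in Ici β, p' u)
    (h : ℝ → ℝ) (hhA : ∀ u, u ≤ α → h u = h α) (hhB : ∀ u, β ≤ u → h u = h β)
    (hint : Integrable fun u => h u * δ u * q u) :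
    ∫ u, h u * δ u * q u = 0 := by
  have tail : ∀ (s : Set ℝ), MeasurableSet s → ∀ (c cc : ℝ),
      (∀ u ∈ s, h u = c) → (∀ u ∈ s, δ u = cc - sψ u) →
      (cc * ∫ u in s, q u = ∫ u in s, p' u) →
      ∫ u in s, h u * δ u * q u = 0 := by
    intro s hs c cc hc hδs hcc
    by_cases hc0 : c = 0
    · rw [setIntegral_congr_fun hs (g := fun _ => (0:ℝ)) ?_, integral_zero]
      intro u hu; show h u * δ u * q u = 0
      rw [hc u hu, hc0]; ring
    · have heq : ∀ u ∈ s, h u * δ u * q u = c * (cc * q u - sψ u * q u) := by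
        intro u hu; rw [hc u hu, hδs u hu]; ring
      have hres : IntegrableOn (fun u => c * (cc * q u - sψ u * q u)) s :=
        (hint.integrableOn.congr_fun heq hs)
      have hres2 : IntegrableOn (fun u => cc * q u - sψ u * q u) s := by
        refine IntegrableOn.congr_fun (hres.smul c⁻¹) (fun u _ => ?_) hs
        simp only [Pi.smul_apply, smul_eq_mul]
        field_simp
      have hsq : IntegrableOn (fun u => sψ u * q u) s := by
        refine IntegrableOn.congr_fun (((hq.integrableOn).const_mul cc).sub hres2)
          (fun u _ => ?_) hs
        simp only [Pi.sub_apply]; ring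
      have e1 : ∫ u in s, h u * δ u * q u = c * (cc * (∫ u in s, q u) - ∫ u in s, sψ u * q u) := by
        rw [setIntegral_congr_fun hs heq, integral_const_mul,
          integral_sub ((hq.integrableOn).const_mul cc) hsq, integral_const_mul]
      have e2 : ∫ u in s, sψ u * q u = ∫ u in s, p' u :=
        setIntegral_congr_ae hs (by filter_upwards [hqp] with u hu _ using hu)
      rw [e1, e2]; linear_combination c * hcc
  have hIic : ∫ u in Iic α, h u * δ u * q u = 0 := by
    refine tail _ measurableSet_Iic (h α) cA (fun u hu => hhA u hu) (fun u hu => ?_) hA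
    rw [hδ u, if_pos (mem_Iic.mp hu)]
  have hIci : ∫ u in Ici β, h u * δ u * q u = 0 := by
    refine tail _ measurableSet_Ici (h β) cB (fun u hu => hhB u hu) (fun u hu => ?_) hB
    have hu' : β ≤ u := mem_Ici.mp hu
    rw [hδ u, if_neg (by push_neg; exact lt_of_lt_of_le hαβ hu'), if_neg (not_lt.2 hu')]
  have hIoo : ∫ u in Ioo α β, h u * δ u * q u = 0 := by
    rw [setIntegral_congr_fun measurableSet_Ioo (g := fun _ => (0:ℝ)) ?_, integral_zero]
    intro u hu; show h u * δ u * q u = 0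
    rw [hδ u, if_neg (not_le.2 hu.1), if_pos hu.2]; ring
  have split2 : ∫ u in Ioi α, h u * δ u * q u =
      (∫ u in Ioo α β, h u * δ u * q u) + ∫ u in Ici β, h u * δ u * q u := by
    rw [← setIntegral_union ?_ measurableSet_Ici
      (hint.integrableOn) (hint.integrableOn), Ioo_union_Ici_eq_Ioi hαβ]
    exact (Iio_disjoint_Ici le_rfl).mono_left (fun u hu => hu.2)
  have split1 := intervalIntegral.integral_Iic_add_Ioi (b := α) (μ := volume)
    (hint.integrableOn) (hint.integrableOn)
  rw [← split1, split2, hIic, hIoo, hIci]; ring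

lemma capg_clip_idem {α β t : ℝ} (hαβ : α ≤ β) :
    max (min (max (min t β) α) β) α = max (min t β) α := by
  have h2 : max (min t β) α ≤ β := max_le (min_le_right _ _) hαβ
  rw [min_eq_left h2, max_eq_left (le_max_right _ _)]

lemma capg_cons_clip {n : ℕ} (x : ℝ) (y : Fin n → ℝ) (α β : ℝ) :
    (fun i => max (min (Fin.cons (α := fun _ => ℝ) x y i) β) α)
      = Fin.cons (α := fun _ => ℝ) (max (min x β) α) (fun j => max (min (y j) β) α) := by
  funext i
  refine Fin.cases ?_ (fun j => ?_) i <;> simp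

/-- Induction over coordinates: if for every coordinate the "score difference" `δ i`
kills every tail-constant test function, then the full vector integral vanishes. -/
lemma capg_vanish : ∀ (n : ℕ) (q δ : Fin n → ℝ → ℝ) (α β : ℝ), α ≤ β →
    ∀ (f : (Fin n → ℝ) → ℝ),
    (∀ i, Measurable (q i)) → (∀ i, Integrable (q i)) → (∀ i u, 0 ≤ q i u) →
    (∀ (i : Fin n) (h : ℝ → ℝ), (∀ u, u ≤ α → h u = h α) → (∀ u, β ≤ u → h u = h β) →
      Integrable (fun u => h u * δ i u * q i u) → (∫ u, h u * δ i u * q i u) = 0) →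
    Measurable f → (∀ u : Fin n → ℝ, f u = f (fun i => max (min (u i) β) α)) →
    (∃ M : ℝ, ∀ u, |f u| ≤ M) →
    Integrable (fun u : Fin n → ℝ => f u * (∑ i, δ i (u i)) * ∏ i, q i (u i)) →
    ∫ u : Fin n → ℝ, f u * (∑ i, δ i (u i)) * ∏ i, q i (u i) = 0 := by
  intro n
  induction n with
  | zero =>
    intro q δ α β hαβ f hqm hqi hqn hkey hfm hclip hfb hF
    simp
  | succ n IH =>
    intro q δ α β hαβ f hqm hqi hqn hkey hfm hclip hfb hF
    obtain ⟨M, hM⟩ := hfb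
    have M0 : 0 ≤ M := le_trans (abs_nonneg _) (hM (fun _ => 0))
    set e := MeasurableEquiv.piFinSuccAbove (fun _ : Fin (n+1) => ℝ) 0 with he
    have mp : MeasurePreserving e.symm :=
      (volume_preserving_piFinSuccAbove (fun _ : Fin (n+1) => ℝ) 0).symm
    set F : (Fin (n+1) → ℝ) → ℝ :=
      fun u => f u * (∑ i, δ i (u i)) * ∏ i, q i (u i) with hFdef
    set G : ℝ × (Fin n → ℝ) → ℝ := fun z =>
      f (Fin.cons z.1 z.2) * (δ 0 z.1 + ∑ j, δ j.succ (z.2 j)) *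
        (q 0 z.1 * ∏ j, q j.succ (z.2 j)) with hGdef
    have hGe : ∀ z : ℝ × (Fin n → ℝ), F (e.symm z) = G z := by
      rintro ⟨x, y⟩
      have hx : e.symm (x, y) = Fin.cons x y := by
        simp only [he, MeasurableEquiv.piFinSuccAbove_symm_apply]
        exact Fin.insertNth_zero' x y
      rw [hx, hFdef, hGdef]
      simp [Fin.sum_univ_succ, Fin.prod_univ_succ]
    have hGF : G = F ∘ e.symm := funext fun z => (hGe z).symm
    have hGint : Integrable G := by
      rw [hGF]
      exact (mp.integrable_comp_emb (MeasurableEquiv.measurableEmbedding e.symm)).2 hF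
    have hG' : Integrable G ((volume : Measure ℝ).prod (volume : Measure (Fin n → ℝ))) := by
      rwa [← Measure.volume_eq_prod]
    have hconsM : Measurable (fun z : ℝ × (Fin n → ℝ) => (Fin.cons z.1 z.2 : Fin (n+1) → ℝ)) := by
      refine measurable_pi_iff.2 (fun i => ?_)
      refine Fin.cases ?_ (fun j => ?_) i
      · simpa using measurable_fst
      · simp only [Fin.cons_succ]; exact (measurable_pi_apply j).comp measurable_snd
    have hconsMx : ∀ y : Fin n → ℝ, Measurable (fun x : ℝ => f (Fin.cons x y)) := fun y =>
      hfm.comp (hconsM.comp (measurable_id.prodMk measurable_const))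
    have hfq : ∀ y : Fin n → ℝ, Integrable (fun x : ℝ => f (Fin.cons x y) * q 0 x) := fun y =>
      (hqi 0).bdd_mul (c := M) (hconsMx y).aestronglyMeasurable
        (Filter.Eventually.of_forall fun x => by simpa [Real.norm_eq_abs] using hM _)
    set g : (Fin n → ℝ) → ℝ := fun y => ∫ x, f (Fin.cons x y) * q 0 x with hgdef
    -- tail constancy of x ↦ f (cons x y)
    have htA : ∀ (y : Fin n → ℝ) (x : ℝ), x ≤ α → f (Fin.cons x y) = f (Fin.cons α y) := by
      intro y x hx
      rw [hclip (Fin.cons x y), hclip (Fin.cons α y), capg_cons_clip, capg_cons_clip]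
      have h1 : max (min x β) α = α := by
        rw [min_eq_left (le_trans hx hαβ), max_eq_right hx]
      have h2 : max (min α β) α = α := by
        rw [min_eq_left hαβ, max_self]
      rw [h1, h2]
    have htB : ∀ (y : Fin n → ℝ) (x : ℝ), β ≤ x → f (Fin.cons x y) = f (Fin.cons β y) := by
      intro y x hx
      rw [hclip (Fin.cons x y), hclip (Fin.cons β y), capg_cons_clip, capg_cons_clip]
      have h1 : max (min x β) α = max β α := by rw [min_eq_right hx]
      have h2 : max (min β β) α = max β α := by rw [min_self]
      rw [h1, h2]
    -- the inner integral
    have claim : ∀ y : Fin n → ℝ, Integrable (fun x => G (x, y)) →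
        ∫ x, G (x, y) = g y * (∑ j, δ j.succ (y j)) * ∏ j, q j.succ (y j) := by
      intro y hy
      have hC : (0:ℝ) ≤ ∏ j, q j.succ (y j) := Finset.prod_nonneg fun j _ => hqn _ _
      by_cases hC0 : (∏ j, q j.succ (y j)) = 0
      · have hz : (fun x => G (x, y)) = fun _ => (0:ℝ) := by
          funext x; rw [hGdef]; simp only; rw [hC0]; ring
        rw [hz, integral_zero, hC0, mul_zero]
      · have h1 : Integrable (fun x => f (Fin.cons x y) *
            (δ 0 x + ∑ j, δ j.succ (y j)) * q 0 x) := by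
          have h2 := hy.const_mul (∏ j, q j.succ (y j))⁻¹
          refine h2.congr (Filter.Eventually.of_forall fun x => ?_)
          rw [hGdef]; simp only; field_simp
        have h2 : Integrable (fun x => f (Fin.cons x y) * q 0 x * ∑ j, δ j.succ (y j)) :=
          (hfq y).mul_const _
        have h3 : Integrable (fun x => f (Fin.cons x y) * δ 0 x * q 0 x) := by
          refine (h1.sub h2).congr (Filter.Eventually.of_forall fun x => ?_)
          simp only [Pi.sub_apply]; ring
        have hz := hkey 0 (fun x => f (Fin.cons x y)) (htA y) (htB y) h3
        have hsplit : (fun x => G (x, y)) = fun x =>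
            (f (Fin.cons x y) * δ 0 x * q 0 x) * (∏ j, q j.succ (y j)) +
            (f (Fin.cons x y) * q 0 x) * ((∑ j, δ j.succ (y j)) * ∏ j, q j.succ (y j)) := by
          funext x; rw [hGdef]; simp only; ring
        rw [hsplit, integral_add (h3.mul_const _) ((hfq y).mul_const _),
          integral_mul_const, integral_mul_const, hz, hgdef]
        simp only; ring
    have hsec := hG'.prod_left_ae
    have hae : (fun y => ∫ x, G (x, y)) =ᵐ[(volume : Measure (Fin n → ℝ))]
        fun y => g y * (∑ j, δ j.succ (y j)) * ∏ j, q j.succ (y j) := by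
      filter_upwards [hsec] with y hy using claim y hy
    have hIint : Integrable (fun y => ∫ x, G (x, y)) := hG'.integral_prod_right
    have hgint : Integrable (fun y : Fin n → ℝ =>
        g y * (∑ j, δ j.succ (y j)) * ∏ j, q j.succ (y j)) := hIint.congr hae
    -- measurability of g
    have hprodM : Measurable (fun z : ℝ × (Fin n → ℝ) => f (Fin.cons z.1 z.2) * q 0 z.1) :=
      (hfm.comp hconsM).mul ((hqm 0).comp measurable_fst)
    have hgm : Measurable g :=
      hprodM.stronglyMeasurable.integral_prod_left'.measurable
    -- clip invariance of g
    have hgclip : ∀ y : Fin n → ℝ, g y = g (fun j => max (min (y j) β) α) := by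
      intro y
      rw [hgdef]; simp only
      refine integral_congr_ae (Filter.Eventually.of_forall fun x => ?_)
      show f (Fin.cons x y) * q 0 x = f (Fin.cons x fun j => max (min (y j) β) α) * q 0 x
      have e1 : f (Fin.cons x y) =
          f (Fin.cons (max (min x β) α) (fun j => max (min (y j) β) α)) := by
        rw [hclip (Fin.cons x y), capg_cons_clip]
      have e2 : f (Fin.cons x (fun j => max (min (y j) β) α)) =
          f (Fin.cons (max (min x β) α) (fun j => max (min (y j) β) α)) := by
        rw [hclip (Fin.cons x _), capg_cons_clip]
        congr 1
        funext i
        refine Fin.cases rfl (fun j => ?_) i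
        simp only [Fin.cons_succ]
        exact capg_clip_idem hαβ
      rw [e1, ← e2]
    -- boundedness of g
    have hgbdd : ∃ M' : ℝ, ∀ y, |g y| ≤ M' := by
      refine ⟨M * ∫ x, |q 0 x|, fun y => ?_⟩
      rw [hgdef]; simp only
      calc |∫ x, f (Fin.cons x y) * q 0 x| ≤ ∫ x, |f (Fin.cons x y) * q 0 x| :=
            norm_integral_le_integral_norm (fun x => f (Fin.cons x y) * q 0 x)
        _ ≤ ∫ x, M * |q 0 x| := by
            refine integral_mono (hfq y).abs (((hqi 0).abs).const_mul M) (fun x => ?_)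
            rw [abs_mul]
            exact mul_le_mul_of_nonneg_right (hM _) (abs_nonneg _)
        _ = M * ∫ x, |q 0 x| := integral_const_mul M _
    have hIH := IH (fun j => q j.succ) (fun j => δ j.succ) α β hαβ g
      (fun j => hqm j.succ) (fun j => hqi j.succ) (fun j u => hqn j.succ u)
      (fun j => hkey j.succ) hgm hgclip hgbdd hgint
    calc ∫ u : Fin (n+1) → ℝ, f u * (∑ i, δ i (u i)) * ∏ i, q i (u i)
        = ∫ u, F u := rfl
      _ = ∫ z, F (e.symm z) := (mp.integral_comp (MeasurableEquiv.measurableEmbedding e.symm) F).symm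
      _ = ∫ z, G z := integral_congr_ae (Filter.Eventually.of_forall fun z => (hGe z).symm) |>.symm
      _ = ∫ z, G z ∂((volume : Measure ℝ).prod (volume : Measure (Fin n → ℝ))) := by
          rw [← Measure.volume_eq_prod]
      _ = ∫ y, ∫ x, G (x, y) := integral_prod_symm G hG'
      _ = ∫ y : Fin n → ℝ, g y * (∑ j, δ j.succ (y j)) * ∏ j, q j.succ (y j) :=
          integral_congr_ae hae
      _ = 0 := hIH


/-- unbiasedness of CAPG for vector actions with independent coordinates:
`E_u[f(u) ψ̄(u)] = E_u[f(u) ψ(u)]` where `ψ(u) = Σ_i ∇_θ log p_θ^{(i)}(u_i)` and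
`ψ̄(u) = Σ_i ψ̄^{(i)}(u_i)`, the joint density being the product of the coordinates'
densities, and `f` invariant under elementwise clipping. -/
theorem capg_unbiased_vector
    (d : ℕ) (hd : 1 ≤ d)
    (p : Fin d → ℝ → ℝ → ℝ) (p' ψ ψbar : Fin d → ℝ → ℝ) (f : (Fin d → ℝ) → ℝ)
    (θ α β : ℝ) (cA cB : Fin d → ℝ) (hαβ : α < β)
    (hpdf : ∀ i t, ∫ u, p i t u = 1) (hnn : ∀ i t u, 0 ≤ p i t u)
    (hp' : ∀ i u, HasDerivAt (fun t => p i t u) (p' i u) θ)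
    (hψ : ∀ i u, HasDerivAt (fun t => Real.log (p i t u)) (ψ i u) θ)
    (hswapA : ∀ i, HasDerivAt (fun t => ∫ u in Iic α, p i t u) (∫ u in Iic α, p' i u) θ)
    (hswapB : ∀ i, HasDerivAt (fun t => ∫ u in Ici β, p i t u) (∫ u in Ici β, p' i u) θ)
    (hposA : ∀ i, 0 < ∫ u in Iic α, p i θ u)
    (hltB : ∀ i, (∫ u in Iic β, p i θ u) < 1)
    (hcA : ∀ i, HasDerivAt (fun t => Real.log (∫ u in Iic α, p i t u)) (cA i) θ)
    (hcB : ∀ i, HasDerivAt (fun t => Real.log (1 - ∫ u in Iic β, p i t u)) (cB i) θ)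
    (hψbar : ∀ i u, ψbar i u = if u ≤ α then cA i else if u < β then ψ i u else cB i)
    (hclip : ∀ u : Fin d → ℝ, f u = f (fun i => max (min (u i) β) α))
    (hfmeas : Measurable f) (hfbdd : ∃ M : ℝ, ∀ u, |f u| ≤ M)
    (hint : Integrable (fun u : Fin d → ℝ => f u * (∑ i, ψ i (u i)) * ∏ i, p i θ (u i)))
    (hint' : Integrable (fun u : Fin d → ℝ => f u * (∑ i, ψbar i (u i)) * ∏ i, p i θ (u i))) :
    ∫ u : Fin d → ℝ, f u * (∑ i, ψbar i (u i)) * ∏ i, p i θ (u i) =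
      ∫ u : Fin d → ℝ, f u * (∑ i, ψ i (u i)) * ∏ i, p i θ (u i) := by
  classical
  -- densities are integrable
  have hIntAll : ∀ i t, Integrable (p i t) := by
    intro i t
    by_contra hc
    have := hpdf i t
    rw [integral_undef hc] at this
    exact zero_ne_one this
  -- pointwise score identity
  have hψp : ∀ i u, ψ i u * p i θ u = p' i u := by
    intro i u
    rcases (hnn i θ u).lt_or_eq with hpos | h0
    · have hlog := (hp' i u).log (ne_of_gt hpos)
      have hu := (hψ i u).unique hlog
      rw [hu]
      field_simp
    · have hmin : IsLocalMin (fun t => p i t u) θ :=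
        Filter.Eventually.of_forall (fun t => by
          show p i θ u ≤ p i t u
          rw [← h0]; exact hnn i t u)
      have hz := hmin.hasDerivAt_eq_zero (hp' i u)
      rw [hz, ← h0, mul_zero]
  have hAi : ∀ i, cA i * (∫ u in Iic α, p i θ u) = ∫ u in Iic α, p' i u := by
    intro i
    have hlog := (hswapA i).log (ne_of_gt (hposA i))
    have hu := (hcA i).unique hlog
    rw [hu]
    field_simp [ne_of_gt (hposA i)]
  have hIicIci : ∀ i t, 1 - (∫ u in Iic β, p i t u) = ∫ u in Ici β, p i t u := by
    intro i t
    have hadd := intervalIntegral.integral_Iic_add_Ioi (b := β) (μ := volume)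
      ((hIntAll i t).integrableOn) ((hIntAll i t).integrableOn)
    rw [hpdf i t] at hadd
    rw [integral_Ici_eq_integral_Ioi]
    linarith
  have hposB : ∀ i, 0 < ∫ u in Ici β, p i θ u := by
    intro i
    rw [← hIicIci]
    linarith [hltB i]
  have hcB' : ∀ i, HasDerivAt (fun t => Real.log (∫ u in Ici β, p i t u)) (cB i) θ := by
    intro i
    have hfe : (fun t => Real.log (1 - ∫ u in Iic β, p i t u))
        = fun t => Real.log (∫ u in Ici β, p i t u) := funext fun t => by rw [hIicIci]
    rw [← hfe]
    exact hcB i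
  have hBi : ∀ i, cB i * (∫ u in Ici β, p i θ u) = ∫ u in Ici β, p' i u := by
    intro i
    have hlog := (hswapB i).log (ne_of_gt (hposB i))
    have hu := (hcB' i).unique hlog
    rw [hu]
    field_simp [ne_of_gt (hposB i)]
  -- measurable nonnegative versions of the densities
  set q : Fin d → ℝ → ℝ := fun i u => max ((hIntAll i θ).1.mk (p i θ) u) 0 with hqdef
  have hqm : ∀ i, Measurable (q i) := fun i =>
    ((hIntAll i θ).1.stronglyMeasurable_mk.measurable).max measurable_const
  have hqe : ∀ i, q i =ᵐ[volume] p i θ := by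
    intro i
    filter_upwards [(hIntAll i θ).1.ae_eq_mk] with u hu
    rw [hqdef]
    simp only
    rw [← hu, max_eq_left (hnn i θ u)]
  have hqn : ∀ i u, 0 ≤ q i u := fun i u => le_max_right _ _
  have hqint : ∀ i, Integrable (q i) := fun i => (hIntAll i θ).congr (hqe i).symm
  -- difference of scores
  set δ : Fin d → ℝ → ℝ := fun i u => ψbar i u - ψ i u with hδdef
  have hδif : ∀ i u, δ i u = if u ≤ α then cA i - ψ i u else if u < β then 0 else cB i - ψ i u := by
    intro i u
    rw [hδdef]
    simp only
    rw [hψbar i u]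
    split_ifs <;> ring
  -- the key one-dimensional property
  have hkey : ∀ (i : Fin d) (h : ℝ → ℝ), (∀ u, u ≤ α → h u = h α) → (∀ u, β ≤ u → h u = h β) →
      Integrable (fun u => h u * δ i u * q i u) → (∫ u, h u * δ i u * q i u) = 0 := by
    intro i h hA' hB' hint''
    refine capg_key1d α β hαβ (q i) (p' i) (ψ i) (δ i) (cA i) (cB i) (hqint i) (hδif i)
      ?_ ?_ ?_ h hA' hB' hint''
    · filter_upwards [hqe i] with u hu
      rw [hu]
      exact hψp i u
    · have hq : ∫ u in Iic α, q i u = ∫ u in Iic α, p i θ u :=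
        setIntegral_congr_ae measurableSet_Iic (by filter_upwards [hqe i] with u hu _ using hu)
      rw [hq]
      exact hAi i
    · have hq : ∫ u in Ici β, q i u = ∫ u in Ici β, p i θ u :=
        setIntegral_congr_ae measurableSet_Ici (by filter_upwards [hqe i] with u hu _ using hu)
      rw [hq]
      exact hBi i
  -- a.e. equality of the products over the pi measure
  have hprod_ae : ∀ᵐ u : Fin d → ℝ, (∏ i, q i (u i)) = ∏ i, p i θ (u i) := by
    have hpi := MeasureTheory.Measure.ae_eq_pi (μ := fun _ : Fin d => (volume : Measure ℝ)) hqe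
    rw [← volume_pi] at hpi
    filter_upwards [hpi] with u hu
    exact Finset.prod_congr rfl (fun i _ => congrFun hu i)
  -- rewrite the difference integrand
  have hdiff : (fun u : Fin d → ℝ => f u * (∑ i, δ i (u i)) * ∏ i, p i θ (u i))
      = fun u => (f u * (∑ i, ψbar i (u i)) * ∏ i, p i θ (u i))
          - (f u * (∑ i, ψ i (u i)) * ∏ i, p i θ (u i)) := by
    funext u
    rw [hδdef]
    simp only
    rw [Finset.sum_sub_distrib]
    ring
  have hFδ : Integrable (fun u : Fin d → ℝ => f u * (∑ i, δ i (u i)) * ∏ i, p i θ (u i)) := by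
    rw [hdiff]
    exact hint'.sub hint
  have hFq : Integrable (fun u : Fin d → ℝ => f u * (∑ i, δ i (u i)) * ∏ i, q i (u i)) := by
    refine hFδ.congr ?_
    filter_upwards [hprod_ae] with u hu
    rw [hu]
  have hz := capg_vanish d q δ α β hαβ.le f hqm hqint hqn hkey hfmeas hclip hfbdd hFq
  have hz' : ∫ u : Fin d → ℝ, f u * (∑ i, δ i (u i)) * ∏ i, p i θ (u i) = 0 := by
    rw [← hz]
    refine integral_congr_ae ?_
    filter_upwards [hprod_ae] with u hu
    rw [hu]
  rw [hdiff] at hz'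
  rw [integral_sub hint' hint] at hz'
  linarith
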